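/- Let d ≥ 1 and let f ∈ ℝ⟨x₁,…,x_d⟩ with star f = f. Then the following are equivalent: (i) for every n ≥ 1 and every tuple X of symmetric matrices in M_n(ℝ), the matrix f(X) is positive semidefinite; (ii) for every real inner product space V, every tuple X = (X₁,…,X_d) of symmetric ℝ-linear operators Xᵢ : V → V (i.e. ⟪Xᵢu, w⟫ = ⟪u, Xᵢw⟫ for all u, w ∈ V), and every vector v ∈ V, one has ⟪f(X)v, v⟫ ≥ 0. -/

import Mathlib

open Matrix RealInnerProductSpace

private theorem lift_natural {A B : Type*} [Semiring A] [Algebra ℝ A] [Semiring B]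
    [Algebra ℝ B] (φ : A →ₐ[ℝ] B) {d : ℕ} (X : Fin d → A) (f : FreeAlgebra ℝ (Fin d)) :
    φ (FreeAlgebra.lift ℝ X f) = FreeAlgebra.lift ℝ (fun i => φ (X i)) f := by
  have : φ.comp (FreeAlgebra.lift ℝ X) = FreeAlgebra.lift ℝ (fun i => φ (X i)) := by
    apply FreeAlgebra.hom_ext
    funext i
    simp
  exact DFunLike.congr_fun this f

private theorem lift_word {A : Type*} [Semiring A] [Algebra ℝ A] {d : ℕ}
    (X : Fin d → A) (l : List (Fin d)) :
    FreeAlgebra.lift ℝ X ((l.map (FreeAlgebra.ι ℝ)).prod) = (l.map X).prod := by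
  induction l with
  | nil => simp
  | cons i l ih => simp [ih]

private theorem span_words (d : ℕ) :
    Submodule.span ℝ (Set.range fun l : List (Fin d) =>
      ((l.map (FreeAlgebra.ι ℝ)).prod : FreeAlgebra ℝ (Fin d))) = ⊤ := by
  rw [eq_top_iff, ← Algebra.top_toSubmodule, ← FreeAlgebra.adjoin_range_ι,
    Algebra.adjoin_eq_span]
  apply Submodule.span_le.2
  intro x hx
  rw [SetLike.mem_coe] at hx
  obtain ⟨L, hL, rfl⟩ := Submonoid.exists_list_of_mem_closure hx
  apply Submodule.subset_span
  suffices h : ∃ l : List (Fin d), l.map (FreeAlgebra.ι ℝ) = L by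
    obtain ⟨l, rfl⟩ := h
    exact ⟨l, rfl⟩
  clear hx
  induction L with
  | nil => exact ⟨[], by simp⟩
  | cons a L ih =>
    obtain ⟨i, hi⟩ := hL a List.mem_cons_self
    obtain ⟨l, hl⟩ := ih (fun y hy => hL y (List.mem_cons_of_mem a hy))
    exact ⟨i :: l, by simp [hl, hi]⟩

/-- If `f(X)` is PSD for all symmetric matrix tuples, then the quadratic form is
nonnegative on any finite-dimensional real inner product space. -/
private theorem helperA {d : ℕ} (f : FreeAlgebra ℝ (Fin d))
    (h1 : ∀ (n : ℕ), 1 ≤ n → ∀ X : Fin d → Matrix (Fin n) (Fin n) ℝ,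
        (∀ i, (X i)ᵀ = X i) →
        ∀ v : Fin n → ℝ, 0 ≤ v ⬝ᵥ ((FreeAlgebra.lift ℝ X f).mulVec v))
    (W : Type) [NormedAddCommGroup W] [InnerProductSpace ℝ W] [FiniteDimensional ℝ W]
    (hW : 1 ≤ Module.finrank ℝ W)
    (Y : Fin d → Module.End ℝ W)
    (hY : ∀ (i : Fin d) (u w : W), ⟪Y i u, w⟫ = ⟪u, Y i w⟫) (w : W) :
    0 ≤ ⟪(FreeAlgebra.lift ℝ Y f) w, w⟫ := by
  set n := Module.finrank ℝ W with hn
  set b := stdOrthonormalBasis ℝ W with hb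
  set φ : Module.End ℝ W →ₐ[ℝ] Matrix (Fin n) (Fin n) ℝ :=
    ((LinearMap.toMatrixAlgEquiv b.toBasis : Module.End ℝ W ≃ₐ[ℝ] Matrix (Fin n) (Fin n) ℝ) :
      Module.End ℝ W →ₐ[ℝ] Matrix (Fin n) (Fin n) ℝ) with hφ
  have hφ' : ∀ x, φ x = LinearMap.toMatrix b.toBasis b.toBasis x := fun _ => rfl
  set M : Fin d → Matrix (Fin n) (Fin n) ℝ := fun i => φ (Y i) with hM
  have hMsym : ∀ i, (M i)ᵀ = M i := by
    intro i
    ext j k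
    simp only [transpose_apply, hM, hφ', LinearMap.toMatrix_apply,
      OrthonormalBasis.coe_toBasis_repr_apply, OrthonormalBasis.repr_apply_apply,
      OrthonormalBasis.coe_toBasis]
    rw [real_inner_comm, hY, real_inner_comm]
  have hlift : FreeAlgebra.lift ℝ M f = φ (FreeAlgebra.lift ℝ Y f) :=
    (lift_natural φ Y f).symm
  have key := h1 n hW M hMsym (fun j => b.toBasis.repr w j)
  have hmv : (FreeAlgebra.lift ℝ M f).mulVec (fun j => b.toBasis.repr w j) =
      fun j => b.toBasis.repr ((FreeAlgebra.lift ℝ Y f) w) j := by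
    rw [hlift, hφ']
    exact LinearMap.toMatrix_mulVec_repr b.toBasis b.toBasis _ w
  rw [hmv] at key
  have hinner : ⟪(FreeAlgebra.lift ℝ Y f) w, w⟫ =
      (fun j => b.toBasis.repr w j) ⬝ᵥ (fun j => b.toBasis.repr ((FreeAlgebra.lift ℝ Y f) w) j) := by
    rw [real_inner_comm, ← b.repr.inner_map_map w ((FreeAlgebra.lift ℝ Y f) w),
      PiLp.inner_apply]
    simp only [RCLike.inner_apply, starRingEnd_apply, star_trivial, dotProduct,
      OrthonormalBasis.coe_toBasis_repr_apply, mul_comm]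
  rw [hinner]
  exact key

theorem statement3 (d : ℕ) (hd : 1 ≤ d) (f : FreeAlgebra ℝ (Fin d))
    (hf : star f = f) :
    (∀ (n : ℕ), 1 ≤ n → ∀ X : Fin d → Matrix (Fin n) (Fin n) ℝ,
        (∀ i, (X i)ᵀ = X i) →
        ∀ v : Fin n → ℝ, 0 ≤ v ⬝ᵥ ((FreeAlgebra.lift ℝ X f).mulVec v)) ↔
    (∀ (V : Type) [NormedAddCommGroup V] [InnerProductSpace ℝ V]
        (X : Fin d → Module.End ℝ V),
        (∀ (i : Fin d) (u w : V), ⟪X i u, w⟫ = ⟪u, X i w⟫) →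
        ∀ v : V, 0 ≤ ⟪(FreeAlgebra.lift ℝ X f) v, v⟫) := by
  constructor
  · -- hard direction: matrices ⇒ operators
    intro h1 V _ _ X hX v
    by_cases hv0 : v = 0
    · simp [hv0]
    -- decompose f into words
    have hftop : f ∈ Submodule.span ℝ (Set.range fun l : List (Fin d) =>
        ((l.map (FreeAlgebra.ι ℝ)).prod : FreeAlgebra ℝ (Fin d))) := by
      rw [span_words d]; exact Submodule.mem_top
    rw [Finsupp.mem_span_range_iff_exists_finsupp] at hftop
    obtain ⟨c, hc⟩ := hftop
    set N := c.support.sup List.length with hN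
    set W : Submodule ℝ V := Submodule.span ℝ
      ((fun l : List (Fin d) => ((l.map X).prod : Module.End ℝ V) v) ''
        {l : List (Fin d) | l.length ≤ N}) with hWdef
    have hWfin : FiniteDimensional ℝ W := by
      apply FiniteDimensional.span_of_finite
      exact (List.finite_length_le (Fin d) N).image _
    have hmemW : ∀ l : List (Fin d), l.length ≤ N →
        ((l.map X).prod : Module.End ℝ V) v ∈ W := by
      intro l hl
      exact Submodule.subset_span ⟨l, hl, rfl⟩
    have hvW : v ∈ W := by
      have := hmemW [] (Nat.zero_le N)
      simpa using this
    set vW : W := ⟨v, hvW⟩ with hvWdef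
    set Y : Fin d → Module.End ℝ W :=
      fun i => (Submodule.orthogonalProjectionOnto W).toLinearMap ∘ₗ (X i) ∘ₗ W.subtype with hYdef
    have hYsym : ∀ (i : Fin d) (u w : W), ⟪Y i u, w⟫ = ⟪u, Y i w⟫ := by
      intro i u w
      simp only [hYdef, LinearMap.comp_apply, ContinuousLinearMap.coe_coe,
        Submodule.subtype_apply]
      rw [Submodule.inner_orthogonalProjectionOnto_eq_of_mem_right, Submodule.inner_orthogonalProjectionOnto_eq_of_mem_left,
        hX]
    have key : ∀ l : List (Fin d), l.length ≤ N →
        ((((l.map Y).prod : Module.End ℝ W) vW : W) : V) =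
          ((l.map X).prod : Module.End ℝ V) v := by
      intro l
      induction l with
      | nil => intro _; simp [hvWdef]
      | cons i l ih =>
        intro hlen
        have hl : l.length ≤ N := le_trans (by simp) hlen
        have hx : ((i :: l).map X).prod v ∈ W := hmemW _ hlen
        have : (((i :: l).map Y).prod : Module.End ℝ W) vW =
            Y i (((l.map Y).prod : Module.End ℝ W) vW) := by
          simp [Module.End.mul_apply]
        rw [this]
        simp only [hYdef, LinearMap.comp_apply, Submodule.subtype_apply, ih hl,
          ContinuousLinearMap.coe_coe]
        rw [← hYdef, ih hl]
        have hXstep : X i (((l.map X).prod : Module.End ℝ V) v) =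
            (((i :: l).map X).prod : Module.End ℝ V) v := by
          simp [Module.End.mul_apply]
        rw [hXstep]
        have := Submodule.orthogonalProjectionOnto_mem_subspace_eq_self
          (⟨(((i :: l).map X).prod : Module.End ℝ V) v, hx⟩ : W)
        rw [show ((((i :: l).map X).prod : Module.End ℝ V) v) =
          ((⟨(((i :: l).map X).prod : Module.End ℝ V) v, hx⟩ : W) : V) from rfl, this]
    -- rewrite both quadratic forms as sums over the support of c
    have hfY : ⟪(FreeAlgebra.lift ℝ Y f) vW, vW⟫ = ⟪(FreeAlgebra.lift ℝ X f) v, v⟫ := by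
      rw [← hc]
      rw [Finsupp.sum]
      simp only [map_sum, _root_.map_smul, lift_word, LinearMap.sum_apply, LinearMap.smul_apply]
      rw [sum_inner, sum_inner]
      apply Finset.sum_congr rfl
      intro l hl
      have hlen : l.length ≤ N := Finset.le_sup hl
      rw [real_inner_smul_left, real_inner_smul_left, Submodule.coe_inner, key l hlen]
    rw [← hfY]
    have hW1 : 1 ≤ Module.finrank ℝ W := by
      rw [Nat.one_le_iff_ne_zero]
      intro h0
      have : vW = 0 := by
        have := Module.finrank_zero_iff (R := ℝ) (M := W) |>.mp h0
        exact Subsingleton.elim _ _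
      exact hv0 (by simpa [hvWdef, Subtype.ext_iff] using this)
    exact helperA f h1 W hW1 Y hYsym vW
  · -- easy direction: operators ⇒ matrices
    intro h2 n hn X hXsym v
    set b : OrthonormalBasis (Fin n) ℝ (EuclideanSpace ℝ (Fin n)) :=
      EuclideanSpace.basisFun (Fin n) ℝ with hb
    set ψ : Matrix (Fin n) (Fin n) ℝ →ₐ[ℝ] Module.End ℝ (EuclideanSpace ℝ (Fin n)) :=
      ((Matrix.toLinAlgEquiv b.toBasis :
        Matrix (Fin n) (Fin n) ℝ ≃ₐ[ℝ] Module.End ℝ (EuclideanSpace ℝ (Fin n))) :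
        Matrix (Fin n) (Fin n) ℝ →ₐ[ℝ] Module.End ℝ (EuclideanSpace ℝ (Fin n))) with hψ
    have hψapp : ∀ (A : Matrix (Fin n) (Fin n) ℝ) (x : EuclideanSpace ℝ (Fin n)) (j : Fin n),
        ψ A x j = (A *ᵥ (fun i => x i)) j := fun _ _ _ => rfl
    set Y : Fin d → Module.End ℝ (EuclideanSpace ℝ (Fin n)) := fun i => ψ (X i) with hY
    have hinner : ∀ x y : EuclideanSpace ℝ (Fin n),
        ⟪x, y⟫ = (fun i => x i) ⬝ᵥ (fun i => y i) := by
      intro x y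
      rw [PiLp.inner_apply]
      simp [RCLike.inner_apply, dotProduct, mul_comm]
    have hYsym : ∀ (i : Fin d) (u w : EuclideanSpace ℝ (Fin n)), ⟪Y i u, w⟫ = ⟪u, Y i w⟫ := by
      intro i u w
      rw [hinner, hinner]
      have h1' : (fun j => Y i u j) = (X i) *ᵥ (fun j => u j) := funext fun j => hψapp _ u j
      have h2' : (fun j => Y i w j) = (X i) *ᵥ (fun j => w j) := funext fun j => hψapp _ w j
      rw [h1', h2']
      calc ((X i) *ᵥ (fun j => u j)) ⬝ᵥ (fun j => w j)
          = ((fun j => u j) ᵥ* (X i)) ⬝ᵥ (fun j => w j) := by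
            rw [← Matrix.mulVec_transpose, hXsym i]
        _ = (fun j => u j) ⬝ᵥ ((X i) *ᵥ (fun j => w j)) :=
            (Matrix.dotProduct_mulVec _ (X i) _).symm
    have hl : FreeAlgebra.lift ℝ Y f = ψ (FreeAlgebra.lift ℝ X f) := (lift_natural ψ X f).symm
    have key := h2 (EuclideanSpace ℝ (Fin n)) Y hYsym ((WithLp.equiv 2 (Fin n → ℝ)).symm v)
    rw [hl, hinner] at key
    rw [dotProduct_comm]
    exact key
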